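/- If x is the increasing rearrangement of a finite sequence x' and the partial sums of x' (in the original order) are dominated by the partial sums of a nondecreasing sequence y, then the partial sums of the increasing rearrangement x are also dominated by the partial sums of y: x₁ + ⋯ + xₖ ≤ y₁ + ⋯ + yₖ for all k. -/

import Mathlib

/-- A nondecreasing-on-`range n` sequence: the sum of its first `k` terms is at
most the sum over any `k`-element subset of `range n`. -/
lemma sum_range_le_sum_subset (n k : ℕ) (x : ℕ → ℝ)
    (hmono : ∀ i j, i ≤ j → j < n → x i ≤ x j)
    (T : Finset ℕ) (hT : T ⊆ Finset.range n) (hcard : T.card = k) :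
    ∑ i ∈ Finset.range k, x i ≤ ∑ i ∈ T, x i := by
  have e := T.orderIsoOfFin hcard
  have hle : ∀ m (h : m < k), m ≤ (e ⟨m, h⟩ : ℕ) := by
    intro m
    induction m with
    | zero => intro h; exact Nat.zero_le _
    | succ i ih =>
      intro h
      have hi : i < k := Nat.lt_of_succ_lt h
      have hlt : (⟨i, hi⟩ : Fin k) < ⟨i + 1, h⟩ := by
        simp [Fin.lt_def]
      have h1 : ((e ⟨i, hi⟩ : ℕ)) < ((e ⟨i+1, h⟩ : ℕ)) := by
        exact_mod_cast e.strictMono hlt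
      have h2 := ih hi
      omega
  rw [Finset.sum_range fun i => x i]
  have hsum : ∑ i ∈ T, x i = ∑ j : Fin k, x (e j) := by
    rw [← Finset.sum_attach T (fun i => x i)]
    exact (Fintype.sum_equiv (e.toEquiv) _ _ (fun j => rfl)).symm
  rw [hsum]
  apply Finset.sum_le_sum
  intro j _
  have hmem : (e j : ℕ) ∈ Finset.range n := hT (e j).2
  exact hmono j (e j) (hle j j.2) (Finset.mem_range.mp hmem)

/-- if the partial sums of `x'` are dominated by those of a
nondecreasing `y`, then so are the partial sums of the increasing rearrangement
`x` of `x'`. -/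
theorem sorted_partial_sums_dominated (n : ℕ) (x' x y : ℕ → ℝ)
    (σ : Equiv.Perm ℕ) (hσ : ∀ i, i < n → σ i < n)
    (hperm : ∀ i, i < n → x i = x' (σ i))
    (hxmono : ∀ i, i + 1 < n → x i ≤ x (i + 1))
    (hymono : ∀ i, i + 1 < n → y i ≤ y (i + 1))
    (hsum : ∀ k, k ≤ n → ∑ i ∈ Finset.range k, x' i ≤ ∑ i ∈ Finset.range k, y i) :
    ∀ k, k ≤ n → ∑ i ∈ Finset.range k, x i ≤ ∑ i ∈ Finset.range k, y i := by
  intro k hk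
  -- σ maps range n onto range n
  have himg : (Finset.range n).image σ = Finset.range n := by
    apply Finset.eq_of_subset_of_card_le
    · intro j hj
      obtain ⟨i, hi, rfl⟩ := Finset.mem_image.mp hj
      exact Finset.mem_range.mpr (hσ i (Finset.mem_range.mp hi))
    · rw [Finset.card_image_of_injective _ σ.injective]
  have hσ' : ∀ i, i < n → σ.symm i < n := by
    intro i hi
    have : i ∈ (Finset.range n).image σ := by rw [himg]; exact Finset.mem_range.mpr hi
    obtain ⟨j, hj, hji⟩ := Finset.mem_image.mp this
    have : σ.symm i = j := by rw [← hji]; exact σ.symm_apply_apply j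
    rw [this]; exact Finset.mem_range.mp hj
  -- monotonicity of x on range n
  have hmono : ∀ i j, i ≤ j → j < n → x i ≤ x j := by
    intro i j hij hjn
    induction j with
    | zero => simp [Nat.le_zero.mp hij]
    | succ m ih =>
      rcases Nat.lt_or_ge i (m+1) with h | h
      · exact le_trans (ih (Nat.lt_succ_iff.mp h) (Nat.lt_of_succ_lt hjn)) (hxmono m hjn)
      · have : i = m + 1 := le_antisymm hij h
        rw [this]
  set T : Finset ℕ := (Finset.range k).image σ.symm with hT
  have hTsub : T ⊆ Finset.range n := by
    intro j hj
    obtain ⟨i, hi, rfl⟩ := Finset.mem_image.mp hj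
    exact Finset.mem_range.mpr (hσ' i (lt_of_lt_of_le (Finset.mem_range.mp hi) hk))
  have hTcard : T.card = k := by
    rw [hT, Finset.card_image_of_injective _ σ.symm.injective, Finset.card_range]
  have hTsum : ∑ i ∈ T, x i = ∑ i ∈ Finset.range k, x' i := by
    rw [hT, Finset.sum_image (fun a _ b _ h => σ.symm.injective h)]
    apply Finset.sum_congr rfl
    intro i hi
    have hin : i < n := lt_of_lt_of_le (Finset.mem_range.mp hi) hk
    rw [hperm _ (hσ' i hin), σ.apply_symm_apply]
  calc ∑ i ∈ Finset.range k, x i ≤ ∑ i ∈ T, x i :=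
        sum_range_le_sum_subset n k x hmono T hTsub hTcard
    _ = ∑ i ∈ Finset.range k, x' i := hTsum
    _ ≤ ∑ i ∈ Finset.range k, y i := hsum k hk
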